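/- Every finite critical (P5, C4)-free graph G is either a complete graph, or a 'non-empty, 2K1-free'-expansion of the 5-cycle C5, or a 'non-empty, 2K1-free'-expansion of the 5-wheel W5. -/

import Mathlib

open SimpleGraph

/-- `G` is `H`-free: no induced subgraph of `G` is isomorphic to `H`. -/
def IndFree {α β : Type*} (H : SimpleGraph α) (G : SimpleGraph β) : Prop :=
  ∀ s : Set β, ¬ Nonempty (H ≃g G.induce s)

/-- The banner: a 4-cycle `0-1-2-3-0` together with a pendant vertex `4` adjacent to `0`. -/
def banner : SimpleGraph (Fin 5) :=
  SimpleGraph.fromEdgeSet {s(0,1), s(1,2), s(2,3), s(3,0), s(0,4)}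

/-- The co-banner: the complement of the banner. -/
def coBanner : SimpleGraph (Fin 5) := bannerᶜ

/-- `2K₂`: the disjoint union of two edges. -/
def twoK2 : SimpleGraph (Fin 4) := SimpleGraph.fromEdgeSet {s(0,1), s(2,3)}

/-- `3K₁`: three pairwise nonadjacent vertices. -/
def threeK1 : SimpleGraph (Fin 3) := ⊥

/-- The 5-wheel: a 5-cycle `0-1-2-3-4-0` plus a hub `5` adjacent to all cycle vertices. -/
def wheel5 : SimpleGraph (Fin 6) :=
  SimpleGraph.fromEdgeSet
    {s(0,1), s(1,2), s(2,3), s(3,4), s(4,0), s(5,0), s(5,1), s(5,2), s(5,3), s(5,4)}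

/-- A nonempty set `M` is a module if every vertex outside `M` is adjacent to all
or to none of the vertices of `M`. -/
def IsModule {V : Type*} (G : SimpleGraph V) (M : Set V) : Prop :=
  M.Nonempty ∧ ∀ v ∉ M, (∀ u ∈ M, G.Adj v u) ∨ (∀ u ∈ M, ¬ G.Adj v u)

/-- `X` is a clique-separator of modules in `G`. -/
def IsCliqueSeparatorOfModules {V : Type*} (G : SimpleGraph V) (X : Set V) : Prop :=
  (∃ (k : ℕ) (Xs : Fin k → Set V),
      (∀ i, IsModule G (Xs i)) ∧
      (∀ i j, i ≠ j → Disjoint (Xs i) (Xs j)) ∧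
      (∀ i j, i ≠ j → ∀ u ∈ Xs i, ∀ v ∈ Xs j, G.Adj u v) ∧
      X = ⋃ i, Xs i) ∧
  (∃ A B : Set V, A ∪ B = Set.univ ∧ (A \ B).Nonempty ∧ (B \ A).Nonempty ∧
      (∀ a ∈ A \ B, ∀ b ∈ B \ A, ¬ G.Adj a b) ∧ A ∩ B = X)

/-- A graph is prime if it has no homogeneous set,
i.e. no module `M` with `1 < |M| < |V(G)|`. -/
def IsPrime {V : Type*} (G : SimpleGraph V) : Prop :=
  ¬ ∃ M : Set V, IsModule G M ∧ 1 < M.ncard ∧ M.ncard < Nat.card V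

/-- A nonempty graph is critical if deleting any vertex decreases the chromatic number. -/
def IsCritical {V : Type*} (G : SimpleGraph V) : Prop :=
  Nonempty V ∧ ∀ v : V, (G.induce {u | u ≠ v}).chromaticNumber < G.chromaticNumber

/-- `G` is a `non-empty, 2K₁-free'-expansion of `G'`: the fibres of `f` partition `V(G)`
into nonempty cliques, with complete/empty bipartite connections according to `G'`. -/
def IsExpansionOf {V W : Type*} (G : SimpleGraph V) (G' : SimpleGraph W) : Prop :=
  ∃ f : V → W, Function.Surjective f ∧
    (∀ u v, u ≠ v → f u = f v → G.Adj u v) ∧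
    (∀ u v, f u ≠ f v → (G.Adj u v ↔ G'.Adj (f u) (f v)))

/-- The weighted chromatic number `χ_q(G)`: the least `k` such that every vertex `v`
can be assigned a set of `q v` colours from `{1,…,k}` with disjoint sets on adjacent
vertices. -/
noncomputable def wChromaticNumber {V : Type*} (G : SimpleGraph V) (q : V → ℕ) : ℕ :=
  sInf {k | ∃ L : V → Finset (Fin k), (∀ v, (L v).card = q v) ∧
    ∀ ⦃u v⦄, G.Adj u v → Disjoint (L u) (L v)}

/-- The weighted clique number `ω_q(G)`: the maximum total weight of a clique. -/
noncomputable def wCliqueNum {V : Type*} (G : SimpleGraph V) (q : V → ℕ) : ℕ :=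
  sSup {m | ∃ s : Finset V, G.IsClique (s : Set V) ∧ m = ∑ v ∈ s, q v}

/-- `Q(F)`: a path `u₁u₂u₃u₄` whose third vertex `u₃` has been replaced by a copy of `F`,
each of whose vertices is adjacent to both `u₂` and `u₄`. Here `inr 0 = u₁`, `inr 1 = u₂`,
`inr 2 = u₄`, and `inl w` are the vertices of the copy of `F`. -/
def QGraph {W : Type*} (F : SimpleGraph W) : SimpleGraph (W ⊕ Fin 3) :=
  SimpleGraph.fromRel (fun a b =>
    (∃ w w', a = Sum.inl w ∧ b = Sum.inl w' ∧ F.Adj w w') ∨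
    (a = Sum.inr 0 ∧ b = Sum.inr 1) ∨
    (∃ w, a = Sum.inl w ∧ (b = Sum.inr 1 ∨ b = Sum.inr 2)))

/-- The join of two graphs: all edges of both graphs plus all edges in between. -/
def joinGraph {α β : Type*} (G₁ : SimpleGraph α) (G₂ : SimpleGraph β) :
    SimpleGraph (α ⊕ β) :=
  SimpleGraph.fromRel (fun a b =>
    (∃ u v, a = Sum.inl u ∧ b = Sum.inl v ∧ G₁.Adj u v) ∨
    (∃ u v, a = Sum.inr u ∧ b = Sum.inr v ∧ G₂.Adj u v) ∨
    (∃ u v, a = Sum.inl u ∧ b = Sum.inr v))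

/-- `H` has a spanning complete bipartite subgraph. -/
def HasSpanningCompleteBipartite {α : Type*} (H : SimpleGraph α) : Prop :=
  ∃ A B : Set α, A.Nonempty ∧ B.Nonempty ∧ Disjoint A B ∧ A ∪ B = Set.univ ∧
    ∀ a ∈ A, ∀ b ∈ B, H.Adj a b

/-- `G'` is a `q`-expansion of `G`: each vertex `u` of `G` is replaced by a clique on
`q u` vertices, joined completely or not at all according to adjacency in `G`. -/
def IsWeightedExpansion {V' V : Type*} (G' : SimpleGraph V') (G : SimpleGraph V)
    (q : V → ℕ) : Prop :=
  ∃ f : V' → V,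
    (∀ v : V, Nat.card (f ⁻¹' {v}) = q v) ∧
    (∀ a b : V', a ≠ b → f a = f b → G'.Adj a b) ∧
    (∀ a b : V', f a ≠ f b → (G'.Adj a b ↔ G.Adj (f a) (f b)))

/-- `q` is `⊲`-minimal: no weight function pointwise at most `q` with strictly smaller
total weight has the same weighted chromatic number. -/
def IsTriMinimal {V : Type*} [Fintype V] (G : SimpleGraph V) (q : V → ℕ) : Prop :=
  ¬ ∃ q' : V → ℕ, (∀ v, q' v ≤ q v) ∧ (∑ v, q' v) < (∑ v, q v) ∧
      wChromaticNumber G q' = wChromaticNumber G q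

set_option linter.unusedSectionVars false

section Aux
lemma not_indFree_of_pattern {n : ℕ} {V : Type} (H : SimpleGraph (Fin n)) (G : SimpleGraph V)
    (f : Fin n → V) (hinj : Function.Injective f)
    (hiff : ∀ i j, H.Adj i j ↔ G.Adj (f i) (f j)) : ¬ IndFree H G := by
  intro hfree
  apply hfree (Set.range f)
  refine ⟨⟨(Equiv.ofInjective f hinj), ?_⟩⟩
  intro i j
  simp only [comap_adj, Function.Embedding.coe_subtype, Equiv.ofInjective_apply]
  exact (hiff i j).symm

variable {V : Type} {G : SimpleGraph V}

lemma noP5 (hP5 : IndFree (pathGraph 5) G) (a b c d e : V)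
    (hab : G.Adj a b) (hbc : G.Adj b c) (hcd : G.Adj c d) (hde : G.Adj d e)
    (hac : ¬G.Adj a c) (had : ¬G.Adj a d) (hae : ¬G.Adj a e)
    (hbd : ¬G.Adj b d) (hbe : ¬G.Adj b e) (hce : ¬G.Adj c e) : False := by
  have nab : a ≠ b := hab.ne
  have nbc : b ≠ c := hbc.ne
  have ncd : c ≠ d := hcd.ne
  have nde : d ≠ e := hde.ne
  have nac : a ≠ c := fun h => had (h ▸ hcd)
  have nad : a ≠ d := fun h => hae (h ▸ hde)
  have nae : a ≠ e := fun h => hbe (h ▸ hab.symm)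
  have nbd : b ≠ d := fun h => hbe (h ▸ hde)
  have nbe : b ≠ e := fun h => hae (h ▸ hab)
  have nce : c ≠ e := fun h => hbe (h ▸ hbc)
  refine not_indFree_of_pattern _ G ![a,b,c,d,e] ?_ ?_ hP5
  · intro i j hij
    fin_cases i <;> fin_cases j <;> simp_all
  · intro i j
    fin_cases i <;> fin_cases j <;>
      simp only [pathGraph_adj, Matrix.cons_val', Matrix.cons_val_zero, Matrix.cons_val_one,
        Matrix.head_cons, Matrix.cons_val_fin_one, Matrix.head_fin_const, Matrix.cons_val_two,
        Matrix.tail_cons, Matrix.cons_val_three, Matrix.cons_val_four] <;>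
      first
        | exact iff_of_true (by decide) hab
        | exact iff_of_true (by decide) hbc
        | exact iff_of_true (by decide) hcd
        | exact iff_of_true (by decide) hde
        | exact iff_of_true (by decide) hab.symm
        | exact iff_of_true (by decide) hbc.symm
        | exact iff_of_true (by decide) hcd.symm
        | exact iff_of_true (by decide) hde.symm
        | exact iff_of_false (by decide) (G.irrefl)
        | exact iff_of_false (by decide) hac
        | exact iff_of_false (by decide) had
        | exact iff_of_false (by decide) hae
        | exact iff_of_false (by decide) hbd
        | exact iff_of_false (by decide) hbe
        | exact iff_of_false (by decide) hce
        | exact iff_of_false (by decide) (fun h => hac h.symm)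
        | exact iff_of_false (by decide) (fun h => had h.symm)
        | exact iff_of_false (by decide) (fun h => hae h.symm)
        | exact iff_of_false (by decide) (fun h => hbd h.symm)
        | exact iff_of_false (by decide) (fun h => hbe h.symm)
        | exact iff_of_false (by decide) (fun h => hce h.symm)

lemma noC4 (hC4 : IndFree (cycleGraph 4) G) (a b c d : V)
    (hab : G.Adj a b) (hbc : G.Adj b c) (hcd : G.Adj c d) (hda : G.Adj d a)
    (hac : ¬G.Adj a c) (hbd : ¬G.Adj b d) (nac : a ≠ c) (nbd : b ≠ d) : False := by
  have nab : a ≠ b := hab.ne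
  have nbc : b ≠ c := hbc.ne
  have ncd : c ≠ d := hcd.ne
  have nda : d ≠ a := hda.ne
  refine not_indFree_of_pattern _ G ![a,b,c,d] ?_ ?_ hC4
  · intro i j hij
    fin_cases i <;> fin_cases j <;> simp_all
  · intro i j
    fin_cases i <;> fin_cases j <;>
      simp only [Matrix.cons_val', Matrix.cons_val_zero, Matrix.cons_val_one,
        Matrix.head_cons, Matrix.cons_val_fin_one, Matrix.head_fin_const, Matrix.cons_val_two,
        Matrix.tail_cons, Matrix.cons_val_three] <;>
      first
        | exact iff_of_true (by decide) hab
        | exact iff_of_true (by decide) hbc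
        | exact iff_of_true (by decide) hcd
        | exact iff_of_true (by decide) hda
        | exact iff_of_true (by decide) hab.symm
        | exact iff_of_true (by decide) hbc.symm
        | exact iff_of_true (by decide) hcd.symm
        | exact iff_of_true (by decide) hda.symm
        | exact iff_of_false (by decide) (G.irrefl)
        | exact iff_of_false (by decide) hac
        | exact iff_of_false (by decide) hbd
        | exact iff_of_false (by decide) (fun h => hac h.symm)
        | exact iff_of_false (by decide) (fun h => hbd h.symm)

/-- `c` lists the vertices of an induced 5-cycle of `G` in order. -/
def C5Pat (G : SimpleGraph V) (c : Fin 5 → V) : Prop :=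
  ∀ i j, (cycleGraph 5).Adj i j ↔ G.Adj (c i) (c j)

lemma C5Pat.inj {c : Fin 5 → V} (h : C5Pat G c) : Function.Injective c := by
  intro i j hij
  have key : ∀ k, (cycleGraph 5).Adj i k ↔ (cycleGraph 5).Adj j k := by
    intro k; rw [h i k, h j k, hij]
  have H : ∀ i j : Fin 5, (∀ k, (cycleGraph 5).Adj i k ↔ (cycleGraph 5).Adj j k) → i = j := by
    decide
  exact H i j key

lemma C5Pat.rot {c : Fin 5 → V} (h : C5Pat G c) (i : Fin 5) :
    C5Pat G (fun j => c (j + i)) := by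
  intro j k
  rw [← h (j+i) (k+i)]
  have H : ∀ i j k : Fin 5, ((cycleGraph 5).Adj (j+i) (k+i) ↔ (cycleGraph 5).Adj j k) := by decide
  exact (H i j k).symm

lemma noC5 (h5 : ¬ ∃ c, C5Pat G c) (a b c d e : V)
    (hab : G.Adj a b) (hbc : G.Adj b c) (hcd : G.Adj c d) (hde : G.Adj d e) (hea : G.Adj e a)
    (hac : ¬G.Adj a c) (had : ¬G.Adj a d)
    (hbd : ¬G.Adj b d) (hbe : ¬G.Adj b e) (hce : ¬G.Adj c e) : False := by
  apply h5
  refine ⟨![a,b,c,d,e], ?_⟩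
  intro i j
  fin_cases i <;> fin_cases j <;>
    simp only [Matrix.cons_val', Matrix.cons_val_zero, Matrix.cons_val_one,
      Matrix.head_cons, Matrix.cons_val_fin_one, Matrix.head_fin_const, Matrix.cons_val_two,
      Matrix.tail_cons, Matrix.cons_val_three, Matrix.cons_val_four] <;>
    first
      | exact iff_of_true (by decide) hab
      | exact iff_of_true (by decide) hbc
      | exact iff_of_true (by decide) hcd
      | exact iff_of_true (by decide) hde
      | exact iff_of_true (by decide) hea
      | exact iff_of_true (by decide) hab.symm
      | exact iff_of_true (by decide) hbc.symm
      | exact iff_of_true (by decide) hcd.symm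
      | exact iff_of_true (by decide) hde.symm
      | exact iff_of_true (by decide) hea.symm
      | exact iff_of_false (by decide) (G.irrefl)
      | exact iff_of_false (by decide) hac
      | exact iff_of_false (by decide) had
      | exact iff_of_false (by decide) hbd
      | exact iff_of_false (by decide) hbe
      | exact iff_of_false (by decide) hce
      | exact iff_of_false (by decide) (fun h => hac h.symm)
      | exact iff_of_false (by decide) (fun h => had h.symm)
      | exact iff_of_false (by decide) (fun h => hbd h.symm)
      | exact iff_of_false (by decide) (fun h => hbe h.symm)
      | exact iff_of_false (by decide) (fun h => hce h.symm)

section Crit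


variable {V : Type} [Fintype V] {G : SimpleGraph V}

lemma crit_facts (hcrit : IsCritical G) :
    ∃ n : ℕ, 1 ≤ n ∧ G.chromaticNumber = n ∧ ¬ G.Colorable (n-1) ∧
      ∀ v : V, (G.induce {u | u ≠ v}).Colorable (n-1) := by
  obtain ⟨hne, hdel⟩ := hcrit
  have hcol : G.Colorable (Fintype.card V) := colorable_of_fintype G
  have htop : G.chromaticNumber ≠ ⊤ :=
    fun h => by simpa [h] using hcol.chromaticNumber_le
  obtain ⟨n, hn⟩ : ∃ n : ℕ, G.chromaticNumber = n := by
    lift G.chromaticNumber to ℕ using htop with n hn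
    exact ⟨n, rfl⟩
  have hpos : 1 ≤ n := by
    have := chromaticNumber_pos (G := G) hcol
    rw [hn] at this
    exact_mod_cast this
  refine ⟨n, hpos, hn, ?_, ?_⟩
  · intro hc
    have := hc.chromaticNumber_le
    rw [hn] at this
    have : n ≤ n - 1 := by exact_mod_cast this
    omega
  · intro v
    have hlt := hdel v
    rw [hn] at hlt
    have hne' : (G.induce {u | u ≠ v}).chromaticNumber ≠ ⊤ := (hlt.trans_le le_top).ne
    obtain ⟨m, hm⟩ : ∃ m : ℕ, (G.induce {u | u ≠ v}).chromaticNumber = m := by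
      lift (G.induce {u | u ≠ v}).chromaticNumber to ℕ using hne' with m hm
      exact ⟨m, rfl⟩
    have hcolm : (G.induce {u | u ≠ v}).Colorable m := by
      have := colorable_of_chromaticNumber_ne_top hne'
      rwa [hm, ENat.toNat_coe] at this
    have hmn : m < n := by rw [hm] at hlt; exact_mod_cast hlt
    exact hcolm.mono (by omega)

end Crit

section Glue

variable {V : Type} [Fintype V] {G : SimpleGraph V}

lemma glue_coloring {m : ℕ} {A B : Set V}
    (hU : A ∪ B = Set.univ)
    {a0 b0 : V} (ha0 : a0 ∈ A \ B) (hb0 : b0 ∈ B \ A)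
    (hcross : ∀ u ∈ A \ B, ∀ v ∈ B \ A, ¬ G.Adj u v)
    (hK : ∀ x ∈ A ∩ B, ∀ y ∈ A ∩ B, x ≠ y → G.Adj x y)
    (hcolA : (G.induce {u | u ≠ b0}).Colorable m)
    (hcolB : (G.induce {u | u ≠ a0}).Colorable m) :
    G.Colorable m := by
  classical
  obtain ⟨CA⟩ := hcolA
  obtain ⟨CB⟩ := hcolB
  have hab : a0 ≠ b0 := fun h => hb0.2 (h ▸ ha0.1)
  -- total versions
  set fA : V → Fin m := fun v => if h : v ≠ b0 then CA ⟨v, h⟩ else CA ⟨a0, hab⟩ with hfA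
  set fB : V → Fin m := fun v => if h : v ≠ a0 then CB ⟨v, h⟩ else CB ⟨b0, hab.symm⟩ with hfB
  have hAne : ∀ v ∈ A, v ≠ b0 := fun v hv h => hb0.2 (h ▸ hv)
  have hBne : ∀ v ∈ B, v ≠ a0 := fun v hv h => ha0.2 (h ▸ hv)
  have hvalidA : ∀ u ∈ A, ∀ v ∈ A, G.Adj u v → fA u ≠ fA v := by
    intro u hu v hv hadj
    have hu' := hAne u hu; have hv' := hAne v hv
    simp only [hfA, dif_pos hu', dif_pos hv']
    exact CA.valid (by simp [hadj])
  have hvalidB : ∀ u ∈ B, ∀ v ∈ B, G.Adj u v → fB u ≠ fB v := by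
    intro u hu v hv hadj
    have hu' := hBne u hu; have hv' := hBne v hv
    simp only [hfB, dif_pos hu', dif_pos hv']
    exact CB.valid (by simp [hadj])
  set K : Set V := A ∩ B with hKdef
  set φA : K → Fin m := fun k => fA k with hφA
  set φB : K → Fin m := fun k => fB k with hφB
  have hinjA : Function.Injective φA := by
    intro x y hxy
    by_contra hne
    have hxy' : (x : V) ≠ y := fun h => hne (Subtype.ext h)
    exact hvalidA x x.2.1 y y.2.1 (hK x x.2 y y.2 hxy') hxy
  have hinjB : Function.Injective φB := by
    intro x y hxy
    by_contra hne
    have hxy' : (x : V) ≠ y := fun h => hne (Subtype.ext h)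
    exact hvalidB x x.2.2 y y.2.2 (hK x x.2 y y.2 hxy') hxy
  have ecard : Fintype.card {x : Fin m // ¬ x ∈ Set.range φB} =
      Fintype.card {x : Fin m // ¬ x ∈ Set.range φA} := by
    rw [Fintype.card_subtype_compl, Fintype.card_subtype_compl,
      Set.card_range_of_injective hinjB, Set.card_range_of_injective hinjA]
  set e : {x : Fin m // x ∈ Set.range φB} ≃ {x : Fin m // x ∈ Set.range φA} :=
    (Equiv.ofInjective φB hinjB).symm.trans (Equiv.ofInjective φA hinjA) with he
  set σ : Equiv.Perm (Fin m) := Equiv.subtypeCongr e (Fintype.equivOfCardEq ecard) with hσ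
  have hagree : ∀ k : K, σ (φB k) = φA k := by
    intro k
    have hmem : φB k ∈ Set.range φB := ⟨k, rfl⟩
    have h1 : σ (φB k) = (e ⟨φB k, hmem⟩ : Fin m) := by
      rw [hσ]
      unfold Equiv.subtypeCongr
      simp only [Equiv.trans_apply]
      rw [Equiv.sumCompl_symm_apply_of_pos hmem]
      simp only [Equiv.sumCongr_apply, Sum.map_inl, Equiv.sumCompl_apply_inl]
    rw [h1, he]
    have h2 : (⟨φB k, hmem⟩ : {x : Fin m // x ∈ Set.range φB}) = Equiv.ofInjective φB hinjB k :=
      Subtype.ext (by simp [Equiv.ofInjective_apply])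
    rw [h2]
    simp only [Equiv.trans_apply, Equiv.symm_apply_apply, Equiv.ofInjective_apply]
    congr 1
    rw [Equiv.symm_apply_eq]
    exact Subtype.ext (by simp)
  -- final coloring
  set c : V → Fin m := fun v => if v ∈ B \ A then σ (fB v) else fA v with hc
  have hvalid : ∀ {u v : V}, G.Adj u v → c u ≠ c v := by
    intro u v hadj
    have huV : u ∈ A ∪ B := by rw [hU]; trivial
    have hvV : v ∈ A ∪ B := by rw [hU]; trivial
    by_cases hu : u ∈ B \ A <;> by_cases hv : v ∈ B \ A <;>
      simp only [hc, if_pos, if_neg, hu, hv, if_true, if_false]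
    · exact fun hh => hvalidB u hu.1 v hv.1 hadj (σ.injective hh)
    · -- u ∈ B \ A, v ∈ A
      have hvA : v ∈ A := by
        by_cases hA : v ∈ A
        · exact hA
        · rcases hvV with h | h
          · exact h
          · exact absurd ⟨h, hA⟩ hv
      have hvK : v ∈ K := by
        rcases Classical.em (v ∈ B) with h | h
        · exact ⟨hvA, h⟩
        · exact absurd (hcross v ⟨hvA, h⟩ u hu) (fun hh => hh hadj.symm)
      have : σ (fB v) = fA v := hagree ⟨v, hvK⟩
      rw [← this]
      intro hh
      exact hvalidB u hu.1 v hvK.2 hadj (σ.injective hh)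
    · -- u ∈ A, v ∈ B \ A
      have huA : u ∈ A := by
        by_cases hA : u ∈ A
        · exact hA
        · rcases huV with h | h
          · exact h
          · exact absurd ⟨h, hA⟩ hu
      have huK : u ∈ K := by
        rcases Classical.em (u ∈ B) with h | h
        · exact ⟨huA, h⟩
        · exact absurd (hcross u ⟨huA, h⟩ v hv) (fun hh => hh hadj)
      have : σ (fB u) = fA u := hagree ⟨u, huK⟩
      rw [← this]
      intro hh
      exact hvalidB u huK.2 v hv.1 hadj (σ.injective hh.symm).symm
    · -- both in A
      have huA : u ∈ A := by
        by_cases hA : u ∈ A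
        · exact hA
        · rcases huV with h | h
          · exact h
          · exact absurd ⟨h, hA⟩ hu
      have hvA : v ∈ A := by
        by_cases hA : v ∈ A
        · exact hA
        · rcases hvV with h | h
          · exact h
          · exact absurd ⟨h, hA⟩ hv
      exact hvalidA u huA v hvA hadj
  exact ⟨Coloring.mk c hvalid⟩

end Glue

section WalkS

variable {α : Type*} {H : SimpleGraph α}

lemma walk_struct {a b : α} (hr : H.Reachable a b) (hne : a ≠ b) (hnadj : ¬H.Adj a b) :
    (∃ x, H.Adj a x ∧ H.Adj x b) ∨
    (∃ x y, H.Adj a x ∧ H.Adj x y ∧ H.Adj y b ∧ ¬H.Adj a y ∧ ¬H.Adj x b ∧ x ≠ b ∧ y ≠ a) ∨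
    (∃ v0 v1 v2 v3 v4, H.Adj v0 v1 ∧ H.Adj v1 v2 ∧ H.Adj v2 v3 ∧ H.Adj v3 v4 ∧
      ¬H.Adj v0 v2 ∧ ¬H.Adj v0 v3 ∧ ¬H.Adj v0 v4 ∧ ¬H.Adj v1 v3 ∧ ¬H.Adj v1 v4 ∧ ¬H.Adj v2 v4) := by
  obtain ⟨p, hp⟩ := hr.exists_walk_length_eq_dist
  have hdle : ∀ (q : H.Walk a b), H.dist a b ≤ q.length := fun q => H.dist_le q
  cases p with
  | nil => exact absurd rfl hne
  | cons h1 q =>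
    rename_i x1
    cases q with
    | nil => exact absurd h1 hnadj
    | cons h2 r =>
      rename_i x2
      cases r with
      | nil => exact Or.inl ⟨x1, h1, h2⟩
      | cons h3 s =>
        rename_i x3
        cases s with
        | nil =>
          -- walk a - x1 - x2 - b, length 3
          have hlen : H.dist a b = 3 := by simpa using hp.symm
          refine Or.inr (Or.inl ⟨x1, x2, h1, h2, h3, ?_, ?_, ?_, ?_⟩)
          · intro hadj
            have := hdle (Walk.cons hadj (Walk.cons h3 Walk.nil))
            simp [hlen] at this
          · intro hadj
            have := hdle (Walk.cons h1 (Walk.cons hadj Walk.nil))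
            simp [hlen] at this
          · intro heq
            subst heq
            have := hdle (Walk.cons h1 Walk.nil)
            simp [hlen] at this
          · intro heq
            subst heq
            have := hdle (Walk.cons h3 Walk.nil)
            simp [hlen] at this
        | cons h4 t =>
          rename_i x4
          -- p = a-x1-x2-x3-x4 ++ t, length = 4 + t.length
          have hlen : H.dist a b = 4 + t.length := by
            rw [← hp]; simp; omega
          refine Or.inr (Or.inr ⟨a, x1, x2, x3, x4, h1, h2, h3, h4, ?_, ?_, ?_, ?_, ?_, ?_⟩)
          · intro hadj
            have := hdle (Walk.cons hadj (Walk.cons h3 (Walk.cons h4 t)))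
            simp [hlen] at this; omega
          · intro hadj
            have := hdle (Walk.cons hadj (Walk.cons h4 t))
            simp [hlen] at this; omega
          · intro hadj
            have := hdle (Walk.cons hadj t)
            simp [hlen] at this; omega
          · intro hadj
            have := hdle (Walk.cons h1 (Walk.cons hadj (Walk.cons h4 t)))
            simp [hlen] at this; omega
          · intro hadj
            have := hdle (Walk.cons h1 (Walk.cons hadj t))
            simp [hlen] at this; omega
          · intro hadj
            have := hdle (Walk.cons h1 (Walk.cons h2 (Walk.cons hadj t)))
            simp [hlen] at this; omega

end WalkS

section Main
variable {V : Type} [Fintype V] {G : SimpleGraph V}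

lemma no_cutset (hcrit : IsCritical G) {A B : Set V}
    (hU : A ∪ B = Set.univ)
    {a0 b0 : V} (ha0 : a0 ∈ A \ B) (hb0 : b0 ∈ B \ A)
    (hcross : ∀ u ∈ A \ B, ∀ v ∈ B \ A, ¬ G.Adj u v)
    (hK : ∀ x ∈ A ∩ B, ∀ y ∈ A ∩ B, x ≠ y → G.Adj x y) : False := by
  obtain ⟨n, hn1, hχ, hnot, hdel⟩ := crit_facts hcrit
  exact hnot (glue_coloring hU ha0 hb0 hcross hK (hdel b0) (hdel a0))

lemma caseA (hcrit : IsCritical G)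
    (hP5 : IndFree (pathGraph 5) G) (hC4 : IndFree (cycleGraph 4) G)
    (h5 : ¬ ∃ c, C5Pat G c) : ∀ u v : V, u ≠ v → G.Adj u v := by
  classical
  by_contra hnc
  push_neg at hnc
  obtain ⟨a', b', hne', hnadj'⟩ := hnc
  set P : Finset (V × V) := Finset.univ.filter (fun p => p.1 ≠ p.2 ∧ ¬ G.Adj p.1 p.2) with hP
  have hPne : (a', b') ∈ P := by simp [hP, hne', hnadj']
  set w : V × V → ℕ := fun p => (Finset.univ.filter (fun x => G.Adj p.1 x ∧ G.Adj p.2 x)).card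
    with hw
  obtain ⟨q, hqP, hqmax⟩ := P.exists_max_image w ⟨_, hPne⟩
  obtain ⟨a, b⟩ := q
  simp only [hP, Finset.mem_filter, Finset.mem_univ, true_and] at hqP
  obtain ⟨hne, hnadj⟩ := hqP
  set S : Set V := {x | G.Adj a x ∧ G.Adj b x} with hS
  set s : Set V := {x | x ∉ S} with hs
  have has : a ∈ s := fun h => G.irrefl h.1
  have hbs : b ∈ s := fun h => G.irrefl h.2
  set H := G.induce s with hH
  have hHadj : ∀ (u v : ↥s), H.Adj u v ↔ G.Adj u.1 v.1 := by
    intro u v; simp [hH]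
  have hnr : ¬ H.Reachable ⟨a, has⟩ ⟨b, hbs⟩ := by
    intro hr
    have hne2 : (⟨a, has⟩ : ↥s) ≠ ⟨b, hbs⟩ := fun h => hne (congrArg Subtype.val h)
    have hnadj2 : ¬ H.Adj ⟨a, has⟩ ⟨b, hbs⟩ := fun h => hnadj ((hHadj _ _).1 h)
    rcases walk_struct hr hne2 hnadj2 with ⟨x, hax, hxb⟩ | ⟨x, y, h1, h2, h3, h4, h5', h6, h7⟩ |
      ⟨v0, v1, v2, v3, v4, e1, e2, e3, e4, n1, n2, n3, n4, n5, n6⟩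
    · exact x.2 ⟨(hHadj _ _).1 hax, ((hHadj _ _).1 hxb).symm⟩
    · -- induced P4 a - x - y - b
      have gax : G.Adj a x.1 := (hHadj _ _).1 h1
      have gxy : G.Adj x.1 y.1 := (hHadj _ _).1 h2
      have gyb : G.Adj y.1 b := (hHadj _ _).1 h3
      have gay : ¬ G.Adj a y.1 := fun h => h4 ((hHadj _ _).2 h)
      have gxb : ¬ G.Adj x.1 b := fun h => h5' ((hHadj _ _).2 h)
      have nxb : x.1 ≠ b := fun h => h6 (Subtype.ext h)
      have nya : y.1 ≠ a := fun h => h7 (Subtype.ext h)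
      have key : ∀ s0 ∈ S, G.Adj s0 x.1 ∧ G.Adj s0 y.1 := by
        intro s0 hs0
        obtain ⟨hsa, hsb⟩ := hs0
        by_cases hsx : G.Adj s0 x.1 <;> by_cases hsy : G.Adj s0 y.1
        · exact ⟨hsx, hsy⟩
        · exact absurd (noC4 hC4 s0 x.1 y.1 b hsx gxy gyb hsb hsy gxb
            (fun h => gay (h ▸ hsa)) nxb) id
        · exact absurd (noC4 hC4 a x.1 y.1 s0 gax gxy hsy.symm hsa.symm gay
            (fun h => hsx h.symm) (Ne.symm nya) (fun h => gxb (by rw [h]; exact hsb.symm))) id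
        · exact absurd (noC5 h5 a x.1 y.1 b s0 gax gxy gyb hsb hsa.symm gay hnadj gxb
            (fun h => hsx h.symm) (fun h => hsy h.symm)) id
      -- maximality contradiction with pair (x.1, b)
      have hmemP : (x.1, b) ∈ P := by simp [hP, nxb, gxb]
      have hsub : (Finset.univ.filter (fun z => G.Adj a z ∧ G.Adj b z)) ⊂
          (Finset.univ.filter (fun z => G.Adj x.1 z ∧ G.Adj b z)) := by
        constructor
        · intro z hz
          simp only [Finset.mem_filter, Finset.mem_univ, true_and] at hz ⊢
          exact ⟨((key z hz).1).symm, hz.2⟩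
        · intro hcon
          have hy : y.1 ∈ Finset.univ.filter (fun z => G.Adj x.1 z ∧ G.Adj b z) := by
            simp [gxy, gyb.symm]
          have := hcon hy
          simp only [Finset.mem_filter, Finset.mem_univ, true_and] at this
          exact gay this.1
      have hlt : w (a, b) < w (x.1, b) := Finset.card_lt_card hsub
      exact absurd (hqmax _ hmemP) (by omega)
    · -- induced P5
      exact noP5 hP5 v0.1 v1.1 v2.1 v3.1 v4.1 ((hHadj _ _).1 e1) ((hHadj _ _).1 e2)
        ((hHadj _ _).1 e3) ((hHadj _ _).1 e4)
        (fun h => n1 ((hHadj _ _).2 h)) (fun h => n2 ((hHadj _ _).2 h))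
        (fun h => n3 ((hHadj _ _).2 h)) (fun h => n4 ((hHadj _ _).2 h))
        (fun h => n5 ((hHadj _ _).2 h)) (fun h => n6 ((hHadj _ _).2 h))
  -- build the cutset
  set Reach : Set V := {v | ∃ h : v ∈ s, H.Reachable ⟨b, hbs⟩ ⟨v, h⟩} with hReach
  have haR : a ∉ Reach := fun ⟨h, hr⟩ => hnr (hr.symm)
  have hbR : b ∈ Reach := ⟨hbs, Reachable.refl _⟩
  refine no_cutset hcrit (A := {v | v ∉ Reach}) (B := S ∪ Reach) ?_ (a0 := a) ?_ (b0 := b) ?_ ?_ ?_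
  · ext v; simp only [Set.mem_union, Set.mem_setOf_eq, Set.mem_univ, iff_true]
    exact or_iff_not_imp_left.2 (fun h => Or.inr (not_not.1 h))
  · exact ⟨haR, fun h => by
      rcases h with h | h
      · exact G.irrefl h.1
      · exact haR h⟩
  · exact ⟨Or.inr hbR, fun h => h hbR⟩
  · intro u hu v hv hadj
    have hus : u ∈ s := fun h => hu.2 (Or.inl h)
    have huR : u ∉ Reach := hu.1
    have hvR : v ∈ Reach := not_not.1 hv.2
    obtain ⟨hvs, hvr⟩ := hvR
    exact huR ⟨hus, hvr.trans (Walk.cons ((hHadj ⟨v, hvs⟩ ⟨u, hus⟩).2 hadj.symm) Walk.nil).reachable⟩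
  · intro x hx y hy hxy
    have hxS : x ∈ S := by
      rcases hx.2 with h | h
      · exact h
      · exact absurd h hx.1
    have hyS : y ∈ S := by
      rcases hy.2 with h | h
      · exact h
      · exact absurd h hy.1
    by_contra hnadjxy
    exact noC4 hC4 a x b y hxS.1 (hxS.2).symm hyS.2 (hyS.1).symm hnadj hnadjxy hne hxy
end Main

section CaseB
variable {V : Type} {G : SimpleGraph V} {c : Fin 5 → V}

/-- adjacent to the whole 5-cycle -/
def Tmem (G : SimpleGraph V) (c : Fin 5 → V) (v : V) : Prop := ∀ j, G.Adj v (c j)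
/-- neighbourhood on the cycle is exactly the triple centered at `i` -/
def Smem (G : SimpleGraph V) (c : Fin 5 → V) (i : Fin 5) (v : V) : Prop :=
  ∀ j, G.Adj v (c j) ↔ (j = i ∨ j = i + 1 ∨ j = i + 4)
/-- the expansion class of `c i` -/
def Vmem (G : SimpleGraph V) (c : Fin 5 → V) (i : Fin 5) (v : V) : Prop :=
  v = c i ∨ Smem G c i v

namespace CB
variable (pat : C5Pat G c)
include pat

lemma cadj (a b : Fin 5) (h : (cycleGraph 5).Adj a b) (i : Fin 5) :
    G.Adj (c (i + a)) (c (i + b)) := by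
  refine (pat _ _).1 ?_
  have H : ∀ a b i : Fin 5, (cycleGraph 5).Adj a b → (cycleGraph 5).Adj (i + a) (i + b) := by
    decide
  exact H a b i h

lemma cnadj (a b : Fin 5) (h : ¬ (cycleGraph 5).Adj a b) (i : Fin 5) :
    ¬ G.Adj (c (i + a)) (c (i + b)) := by
  intro hh
  have H : ∀ a b i : Fin 5, (cycleGraph 5).Adj (i + a) (i + b) → (cycleGraph 5).Adj a b := by
    decide
  exact h (H a b i ((pat _ _).2 hh))

lemma cne (a b : Fin 5) (h : a ≠ b) (i : Fin 5) : c (i + a) ≠ c (i + b) :=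
  fun hc => h (by have := pat.inj hc; exact add_left_cancel this)

lemma cadj' {a b : Fin 5} (h : (cycleGraph 5).Adj a b) : G.Adj (c a) (c b) := (pat _ _).1 h

lemma cnadj' {a b : Fin 5} (h : ¬(cycleGraph 5).Adj a b) : ¬G.Adj (c a) (c b) :=
  fun hh => h ((pat _ _).2 hh)

lemma Smem_adj {i : Fin 5} {v : V} (hv : Smem G c i v) :
    G.Adj v (c (i+0)) ∧ G.Adj v (c (i+1)) ∧ G.Adj v (c (i+4)) ∧
      ¬G.Adj v (c (i+2)) ∧ ¬G.Adj v (c (i+3)) := by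
  refine ⟨(hv (i+0)).2 ?_, (hv (i+1)).2 ?_, (hv (i+4)).2 ?_, ?_, ?_⟩
  · exact Or.inl (add_zero i)
  · exact Or.inr (Or.inl rfl)
  · exact Or.inr (Or.inr rfl)
  · intro h
    have := (hv (i+2)).1 h
    exact (by decide : ∀ i : Fin 5, ¬(i+2 = i ∨ i+2 = i+1 ∨ i+2 = i+4)) i this
  · intro h
    have := (hv (i+3)).1 h
    exact (by decide : ∀ i : Fin 5, ¬(i+3 = i ∨ i+3 = i+1 ∨ i+3 = i+4)) i this

lemma Smem_not_c {i : Fin 5} {v : V} (hv : Smem G c i v) : ∀ j, v ≠ c j := by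
  intro j hj
  subst hj
  obtain ⟨h0, h1, h4, n2, n3⟩ := Smem_adj pat hv
  have a0 : (cycleGraph 5).Adj j (i+0) := (pat _ _).2 h0
  have a1 : (cycleGraph 5).Adj j (i+1) := (pat _ _).2 h1
  have a4 : (cycleGraph 5).Adj j (i+4) := (pat _ _).2 h4
  exact (by decide : ∀ j i : Fin 5, ¬((cycleGraph 5).Adj j (i+0) ∧ (cycleGraph 5).Adj j (i+1) ∧
    (cycleGraph 5).Adj j (i+4))) j i ⟨a0, a1, a4⟩

lemma Smem_uniq {i i' : Fin 5} {v : V} (hv : Smem G c i v) (hv' : Smem G c i' v) : i = i' := by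
  have key : ∀ j, (j = i ∨ j = i + 1 ∨ j = i + 4) ↔ (j = i' ∨ j = i' + 1 ∨ j = i' + 4) :=
    fun j => (hv j).symm.trans (hv' j)
  exact (by decide : ∀ i i' : Fin 5,
    (∀ j, (j = i ∨ j = i + 1 ∨ j = i + 4) ↔ (j = i' ∨ j = i' + 1 ∨ j = i' + 4)) → i = i') i i' key

lemma Tmem_not_Vmem {i : Fin 5} {v : V} (hv : Tmem G c v) : ¬ Vmem G c i v := by
  rintro (rfl | hs)
  · exact G.irrefl (hv i)
  · exact (Smem_adj pat hs).2.2.2.1 (hv (i+2))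

variable {hP5' : IndFree (pathGraph 5) G}

lemma shapeS (hP5 : IndFree (pathGraph 5) G) {v : V} (i j0 j1 j2 j3 : Fin 5)
    (e0 : j0 = i+0) (e1 : j1 = i+1) (e2 : j2 = i+2) (e3 : j3 = i+3)
    (h0 : G.Adj v (c j0)) (n1 : ¬G.Adj v (c j1)) (n2 : ¬G.Adj v (c j2))
    (n3 : ¬G.Adj v (c j3)) : False := by
  subst e0 e1 e2 e3
  exact noP5 hP5 v (c (i+0)) (c (i+1)) (c (i+2)) (c (i+3)) h0
    (cadj pat 0 1 (by decide) i) (cadj pat 1 2 (by decide) i) (cadj pat 2 3 (by decide) i)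
    n1 n2 n3 (cnadj pat 0 2 (by decide) i) (cnadj pat 0 3 (by decide) i)
    (cnadj pat 1 3 (by decide) i)

lemma shape3 (hC4 : IndFree (cycleGraph 4) G) {v : V} (hvc : ∀ j, v ≠ c j)
    (i j0 j1 j2 : Fin 5) (e0 : j0 = i+0) (e1 : j1 = i+1) (e2 : j2 = i+2)
    (h0 : G.Adj v (c j0)) (h2 : G.Adj v (c j2)) (n1 : ¬G.Adj v (c j1)) : False := by
  subst e0 e1 e2
  exact noC4 hC4 v (c (i+0)) (c (i+1)) (c (i+2)) h0
    (cadj pat 0 1 (by decide) i) (cadj pat 1 2 (by decide) i) h2.symm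
    n1 (cnadj pat 0 2 (by decide) i) (hvc _) (cne pat 0 2 (by decide) i)

lemma classify (hP5 : IndFree (pathGraph 5) G) (hC4 : IndFree (cycleGraph 4) G)
    {v : V} (hvc : ∀ j, v ≠ c j) :
    (∀ j, ¬G.Adj v (c j)) ∨ Tmem G c v ∨ ∃ i, Smem G c i v := by
  by_cases h0 : G.Adj v (c 0) <;> by_cases h1 : G.Adj v (c 1) <;>
    by_cases h2 : G.Adj v (c 2) <;> by_cases h3 : G.Adj v (c 3) <;>
    by_cases h4 : G.Adj v (c 4)
  · exact Or.inr (Or.inl (fun j => by fin_cases j <;> assumption))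
  · -- 0,1,2,3
    exact absurd (shape3 pat hC4 hvc 3 3 4 0 (by decide) (by decide) (by decide) h3 h0 h4) id
  · -- 0,1,2,4
    exact absurd (shape3 pat hC4 hvc 2 2 3 4 (by decide) (by decide) (by decide) h2 h4 h3) id
  · -- 0,1,2 : triple centered at 1
    refine Or.inr (Or.inr ⟨1, fun j => ?_⟩)
    fin_cases j
    · exact iff_of_true h0 (by decide)
    · exact iff_of_true h1 (by decide)
    · exact iff_of_true h2 (by decide)
    · exact iff_of_false h3 (by decide)
    · exact iff_of_false h4 (by decide)
  · -- 0,1,3,4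
    exact absurd (shape3 pat hC4 hvc 1 1 2 3 (by decide) (by decide) (by decide) h1 h3 h2) id
  · -- 0,1,3
    exact absurd (shape3 pat hC4 hvc 1 1 2 3 (by decide) (by decide) (by decide) h1 h3 h2) id
  · -- 0,1,4 : triple centered at 0
    refine Or.inr (Or.inr ⟨0, fun j => ?_⟩)
    fin_cases j
    · exact iff_of_true h0 (by decide)
    · exact iff_of_true h1 (by decide)
    · exact iff_of_false h2 (by decide)
    · exact iff_of_false h3 (by decide)
    · exact iff_of_true h4 (by decide)
  · -- 0,1
    exact absurd (shapeS pat hP5 1 1 2 3 4 (by decide) (by decide) (by decide) (by decide)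
      h1 h2 h3 h4) id
  · -- 0,2,3,4
    exact absurd (shape3 pat hC4 hvc 0 0 1 2 (by decide) (by decide) (by decide) h0 h2 h1) id
  · -- 0,2,3
    exact absurd (shape3 pat hC4 hvc 0 0 1 2 (by decide) (by decide) (by decide) h0 h2 h1) id
  · -- 0,2,4
    exact absurd (shape3 pat hC4 hvc 0 0 1 2 (by decide) (by decide) (by decide) h0 h2 h1) id
  · -- 0,2
    exact absurd (shape3 pat hC4 hvc 0 0 1 2 (by decide) (by decide) (by decide) h0 h2 h1) id
  · -- 0,3,4 : triple centered at 4
    refine Or.inr (Or.inr ⟨4, fun j => ?_⟩)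
    fin_cases j
    · exact iff_of_true h0 (by decide)
    · exact iff_of_false h1 (by decide)
    · exact iff_of_false h2 (by decide)
    · exact iff_of_true h3 (by decide)
    · exact iff_of_true h4 (by decide)
  · -- 0,3
    exact absurd (shape3 pat hC4 hvc 3 3 4 0 (by decide) (by decide) (by decide) h3 h0 h4) id
  · -- 0,4
    exact absurd (shapeS pat hP5 0 0 1 2 3 (by decide) (by decide) (by decide) (by decide)
      h0 h1 h2 h3) id
  · -- 0
    exact absurd (shapeS pat hP5 0 0 1 2 3 (by decide) (by decide) (by decide) (by decide)
      h0 h1 h2 h3) id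
  · -- 1,2,3,4
    exact absurd (shape3 pat hC4 hvc 4 4 0 1 (by decide) (by decide) (by decide) h4 h1 h0) id
  · -- 1,2,3 : triple centered at 2
    refine Or.inr (Or.inr ⟨2, fun j => ?_⟩)
    fin_cases j
    · exact iff_of_false h0 (by decide)
    · exact iff_of_true h1 (by decide)
    · exact iff_of_true h2 (by decide)
    · exact iff_of_true h3 (by decide)
    · exact iff_of_false h4 (by decide)
  · -- 1,2,4
    exact absurd (shape3 pat hC4 hvc 2 2 3 4 (by decide) (by decide) (by decide) h2 h4 h3) id
  · -- 1,2
    exact absurd (shapeS pat hP5 2 2 3 4 0 (by decide) (by decide) (by decide) (by decide)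
      h2 h3 h4 h0) id
  · -- 1,3,4
    exact absurd (shape3 pat hC4 hvc 1 1 2 3 (by decide) (by decide) (by decide) h1 h3 h2) id
  · -- 1,3
    exact absurd (shape3 pat hC4 hvc 1 1 2 3 (by decide) (by decide) (by decide) h1 h3 h2) id
  · -- 1,4
    exact absurd (shape3 pat hC4 hvc 4 4 0 1 (by decide) (by decide) (by decide) h4 h1 h0) id
  · -- 1
    exact absurd (shapeS pat hP5 1 1 2 3 4 (by decide) (by decide) (by decide) (by decide)
      h1 h2 h3 h4) id
  · -- 2,3,4 : triple centered at 3
    refine Or.inr (Or.inr ⟨3, fun j => ?_⟩)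
    fin_cases j
    · exact iff_of_false h0 (by decide)
    · exact iff_of_false h1 (by decide)
    · exact iff_of_true h2 (by decide)
    · exact iff_of_true h3 (by decide)
    · exact iff_of_true h4 (by decide)
  · -- 2,3
    exact absurd (shapeS pat hP5 3 3 4 0 1 (by decide) (by decide) (by decide) (by decide)
      h3 h4 h0 h1) id
  · -- 2,4
    exact absurd (shape3 pat hC4 hvc 2 2 3 4 (by decide) (by decide) (by decide) h2 h4 h3) id
  · -- 2
    exact absurd (shapeS pat hP5 2 2 3 4 0 (by decide) (by decide) (by decide) (by decide)
      h2 h3 h4 h0) id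
  · -- 3,4
    exact absurd (shapeS pat hP5 4 4 0 1 2 (by decide) (by decide) (by decide) (by decide)
      h4 h0 h1 h2) id
  · -- 3
    exact absurd (shapeS pat hP5 3 3 4 0 1 (by decide) (by decide) (by decide) (by decide)
      h3 h4 h0 h1) id
  · -- 4
    exact absurd (shapeS pat hP5 4 4 0 1 2 (by decide) (by decide) (by decide) (by decide)
      h4 h0 h1 h2) id
  · -- none
    exact Or.inl (fun j => by fin_cases j <;> assumption)

lemma Vmem_clique (hC4 : IndFree (cycleGraph 4) G) {i : Fin 5} {u v : V}
    (hu : Vmem G c i u) (hv : Vmem G c i v) (hne : u ≠ v) : G.Adj u v := by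
  rcases hu with rfl | hu <;> rcases hv with rfl | hv
  · exact absurd rfl hne
  · have := (Smem_adj pat hv).1
    rw [add_zero] at this
    exact this.symm
  · have := (Smem_adj pat hu).1
    rw [add_zero] at this
    exact this
  · by_contra hnadj
    obtain ⟨u0, u1, u4, un2, un3⟩ := Smem_adj pat hu
    obtain ⟨v0, v1, v4, vn2, vn3⟩ := Smem_adj pat hv
    exact noC4 hC4 u (c (i+4)) v (c (i+1)) u4 v4.symm v1 u1.symm hnadj
      (cnadj pat 4 1 (by decide) i) hne (cne pat 4 1 (by decide) i)

lemma Vmem_consec (hP5 : IndFree (pathGraph 5) G) {i : Fin 5} {u v : V}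
    (hu : Vmem G c i u) (hv : Vmem G c (i+1) v) : G.Adj u v := by
  rcases hu with rfl | hu <;> rcases hv with rfl | hv
  · exact cadj' pat (by
      have : ∀ i : Fin 5, (cycleGraph 5).Adj i (i+1) := by decide
      exact this i)
  · have := (hv i).2 (by
      right; right
      exact (by decide : ∀ i : Fin 5, i = (i+1) + 4) i)
    exact this.symm
  · have := (Smem_adj pat hu).2.1
    exact this
  · by_contra hnadj
    obtain ⟨u0, u1, u4, un2, un3⟩ := Smem_adj pat hu
    have v2 : G.Adj v (c (i+2)) := by
      have := (Smem_adj pat hv).2.1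
      rwa [(by decide : ∀ i : Fin 5, (i+1) + 1 = i + 2) i] at this
    have vn4 : ¬ G.Adj v (c (i+4)) := by
      have := (Smem_adj pat hv).2.2.2.2
      rwa [(by decide : ∀ i : Fin 5, (i+1) + 3 = i + 4) i] at this
    have vn3 : ¬ G.Adj v (c (i+3)) := by
      have := (Smem_adj pat hv).2.2.2.1
      rwa [(by decide : ∀ i : Fin 5, (i+1) + 2 = i + 3) i] at this
    exact noP5 hP5 u (c (i+4)) (c (i+3)) (c (i+2)) v u4
      (cadj pat 4 3 (by decide) i) (cadj pat 3 2 (by decide) i) v2.symm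
      un3 un2 hnadj (cnadj pat 4 2 (by decide) i) (fun h => vn4 h.symm)
      (fun h => vn3 h.symm)

lemma Vmem_far (hC4 : IndFree (cycleGraph 4) G) {i : Fin 5} {u v : V}
    (hu : Vmem G c i u) (hv : Vmem G c (i+2) v) : ¬ G.Adj u v := by
  rcases hu with rfl | hu <;> rcases hv with rfl | hv
  · exact cnadj' pat (by
      have : ∀ i : Fin 5, ¬(cycleGraph 5).Adj i (i+2) := by decide
      exact this i)
  · intro h
    have := (hv i).1 h.symm
    exact (by decide : ∀ i : Fin 5, ¬(i = i+2 ∨ i = (i+2)+1 ∨ i = (i+2)+4)) i this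
  · exact (Smem_adj pat hu).2.2.2.1
  · intro hadj
    obtain ⟨u0, u1, u4, un2, un3⟩ := Smem_adj pat hu
    have v3 : G.Adj v (c (i+3)) := by
      have := (Smem_adj pat hv).2.1
      rwa [(by decide : ∀ i : Fin 5, (i+2) + 1 = i + 3) i] at this
    have vn4 : ¬ G.Adj v (c (i+4)) := by
      have := (Smem_adj pat hv).2.2.2.1
      rwa [(by decide : ∀ i : Fin 5, (i+2) + 2 = i + 4) i] at this
    exact noC4 hC4 u v (c (i+3)) (c (i+4)) hadj v3 (cadj pat 3 4 (by decide) i) u4.symm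
      un3 (fun h => vn4 h) (Smem_not_c pat hu _) (Smem_not_c pat hv _)

lemma Tmem_clique (hC4 : IndFree (cycleGraph 4) G) {u v : V}
    (hu : Tmem G c u) (hv : Tmem G c v) (hne : u ≠ v) : G.Adj u v := by
  by_contra hnadj
  exact noC4 hC4 u (c 0) v (c 2) (hu 0) (hv 0).symm (hv 2) (hu 2).symm hnadj
    (cnadj' pat (by decide)) hne (fun h => (pat.inj.ne (by decide : (0:Fin 5) ≠ 2)) h)

lemma Tmem_Vmem (hC4 : IndFree (cycleGraph 4) G) {i : Fin 5} {t u : V}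
    (ht : Tmem G c t) (hu : Vmem G c i u) : G.Adj t u := by
  rcases hu with rfl | hu
  · exact ht i
  · by_contra hnadj
    obtain ⟨u0, u1, u4, un2, un3⟩ := Smem_adj pat hu
    exact noC4 hC4 u (c (i+4)) t (c (i+1)) u4 (ht (i+4)).symm (ht (i+1)) u1.symm
      (fun h => hnadj h.symm) (cnadj pat 4 1 (by decide) i)
      (fun h => un2 (h ▸ ht (i+2))) (cne pat 4 1 (by decide) i)
end CB
end CaseB


lemma wheel5_adj' (a b : Fin 6) : wheel5.Adj a b ↔
    ((s(a,b) = s(0,1) ∨ s(a,b) = s(1,2) ∨ s(a,b) = s(2,3) ∨ s(a,b) = s(3,4) ∨ s(a,b) = s(4,0) ∨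
      s(a,b) = s(5,0) ∨ s(a,b) = s(5,1) ∨ s(a,b) = s(5,2) ∨ s(a,b) = s(5,3) ∨ s(a,b) = s(5,4))
      ∧ a ≠ b) := by
  rw [wheel5, fromEdgeSet_adj]
  simp [Set.mem_insert_iff]

lemma wheel_hub (j : Fin 5) : wheel5.Adj 5 (Fin.castLE (by norm_num) j) := by
  rw [wheel5_adj']
  revert j; decide

lemma wheel_cyc (i j : Fin 5) :
    wheel5.Adj (Fin.castLE (by norm_num) i) (Fin.castLE (by norm_num) j)
      ↔ (cycleGraph 5).Adj i j := by
  rw [wheel5_adj']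
  revert i j; decide


end Aux

/-- Every finite critical `(P₅, C₄)`-free graph is complete, or a
`non-empty, 2K₁-free'-expansion of `C₅`, or a `non-empty, 2K₁-free'-expansion
of the 5-wheel `W₅`. -/
theorem stmt8 {V : Type} [Fintype V] (G : SimpleGraph V) (hcrit : IsCritical G)
    (hP5 : IndFree (pathGraph 5) G) (hC4 : IndFree (cycleGraph 4) G) :
    (∀ u v : V, u ≠ v → G.Adj u v) ∨
    IsExpansionOf G (cycleGraph 5) ∨ IsExpansionOf G wheel5 := by
  classical
  by_cases h5 : ∃ cc : Fin 5 → V, C5Pat G cc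
  · -- G contains an induced C5
    obtain ⟨c, pat⟩ := h5
    right
    -- no vertex is anticomplete to the cycle
    have hZ : ∀ z : V, ¬ (∀ j, ¬ G.Adj z (c j)) := by
      intro z hz
      refine no_cutset hcrit
        (A := {v | (∀ j, ¬G.Adj v (c j)) ∨ Tmem G c v})
        (B := {v | ¬ (∀ j, ¬G.Adj v (c j))}) ?_ (a0 := z) ?_ (b0 := c 0) ?_ ?_ ?_
      · ext v
        simp only [Set.mem_union, Set.mem_setOf_eq, Set.mem_univ, iff_true]
        by_cases h : ∀ j, ¬G.Adj v (c j)
        · exact Or.inl (Or.inl h)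
        · exact Or.inr h
      · exact ⟨Or.inl hz, fun h => h hz⟩
      · have hc01 : G.Adj (c 0) (c 1) := CB.cadj' pat (by decide)
        refine ⟨fun h => h 1 hc01, ?_⟩
        rintro (h | h)
        · exact h 1 hc01
        · exact G.irrefl (h 0)
      · intro u hu v hv hadj
        have huZ : ∀ j, ¬G.Adj u (c j) := not_not.1 hu.2
        have hvnZ : ¬ (∀ j, ¬G.Adj v (c j)) := hv.1
        have hvnT : ¬ Tmem G c v := fun h => hv.2 (Or.inr h)
        have hvc : ∀ j, v ≠ c j := by
          intro j hj
          exact huZ j (hj ▸ hadj)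
        rcases CB.classify pat hP5 hC4 hvc with h | h | ⟨i, hi⟩
        · exact hvnZ h
        · exact hvnT h
        · obtain ⟨v0, v1, v4, vn2, vn3⟩ := CB.Smem_adj pat hi
          exact noP5 hP5 u v (c (i+1)) (c (i+2)) (c (i+3)) hadj v1
            (CB.cadj pat 1 2 (by decide) i) (CB.cadj pat 2 3 (by decide) i)
            (huZ (i+1)) (huZ (i+2)) (huZ (i+3)) vn2 vn3
            (CB.cnadj pat 1 3 (by decide) i)
      · intro x hx y hy hxy
        have hxT : Tmem G c x := by
          rcases hx.1 with h | h
          · exact absurd h hx.2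
          · exact h
        have hyT : Tmem G c y := by
          rcases hy.1 with h | h
          · exact absurd h hy.2
          · exact h
        exact CB.Tmem_clique pat hC4 hxT hyT hxy
    -- every vertex lies in the hub class or one of the five cycle classes
    have cover : ∀ v : V, Tmem G c v ∨ ∃ i, Vmem G c i v := by
      intro v
      by_cases hvc0 : ∃ j, v = c j
      · obtain ⟨j, rfl⟩ := hvc0
        exact Or.inr ⟨j, Or.inl rfl⟩
      · push_neg at hvc0
        rcases CB.classify pat hP5 hC4 hvc0 with h | h | ⟨i, hi⟩
        · exact absurd h (hZ v)
        · exact Or.inl h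
        · exact Or.inr ⟨i, Or.inr hi⟩
    have Vuniq : ∀ {v : V} {i i' : Fin 5}, Vmem G c i v → Vmem G c i' v → i = i' := by
      rintro v i i' (rfl | hi) (h' | h')
      · exact pat.inj h'
      · exact absurd rfl (CB.Smem_not_c pat h' i)
      · exact absurd h' (CB.Smem_not_c pat hi i')
      · exact CB.Smem_uniq pat hi h'
    have cycfacts1 : ∀ i j : Fin 5, i ≠ j → ¬(cycleGraph 5).Adj i j → (j = i+2 ∨ i = j+2) := by
      decide
    have cycfacts2 : ∀ i j : Fin 5, (cycleGraph 5).Adj i j → (j = i+1 ∨ i = j+1) := by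
      decide
    by_cases hT : ∃ t, Tmem G c t
    · -- wheel expansion
      right
      obtain ⟨t0, ht0⟩ := hT
      have cover2 : ∀ v : V, ¬ Tmem G c v → ∃ i, Vmem G c i v := by
        intro v hv
        rcases cover v with h | h
        · exact absurd h hv
        · exact h
      set g : V → Fin 6 := fun v =>
        if h : Tmem G c v then 5 else Fin.castLE (by norm_num) (Classical.choose (cover2 v h))
        with hg
      have gT : ∀ v (h : Tmem G c v), g v = 5 := fun v h => dif_pos h
      have gV : ∀ v (h : ¬ Tmem G c v),
          Vmem G c (Classical.choose (cover2 v h)) v ∧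
            g v = Fin.castLE (by norm_num) (Classical.choose (cover2 v h)) :=
        fun v h => ⟨Classical.choose_spec (cover2 v h), dif_neg h⟩
      have gne5 : ∀ v (h : ¬ Tmem G c v), g v ≠ 5 := by
        intro v h hc
        rw [(gV v h).2] at hc
        have := congrArg Fin.val hc
        simp only [Fin.coe_castLE] at this
        omega
      have gVmem : ∀ v (h : ¬ Tmem G c v) (i : Fin 5),
          g v = Fin.castLE (by norm_num) i → Vmem G c i v := by
        intro v h i hi
        have h2 := (gV v h).2
        rw [hi] at h2
        have : Classical.choose (cover2 v h) = i := by
          have := congrArg Fin.val h2.symm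
          simp only [Fin.coe_castLE] at this
          exact Fin.ext this
        exact this ▸ (gV v h).1
      refine ⟨g, ?_, ?_, ?_⟩
      · -- surjective
        intro k
        by_cases hk : k = 5
        · exact ⟨t0, by rw [gT t0 ht0, hk]⟩
        · have hklt : k.val < 5 := by
            rcases Nat.lt_or_ge k.val 5 with h | h
            · exact h
            · exact absurd (Fin.ext (by omega : k.val = (5:Fin 6).val)) hk
          set i : Fin 5 := ⟨k.val, hklt⟩ with hi
          have hnotT : ¬ Tmem G c (c i) := fun h => G.irrefl (h i)
          refine ⟨c i, ?_⟩
          have := (gV (c i) hnotT).2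
          have heq : Classical.choose (cover2 (c i) hnotT) = i :=
            Vuniq (gV (c i) hnotT).1 (Or.inl rfl)
          rw [this, heq]
          exact Fin.ext (by simp [hi])
      · -- fibres are cliques
        intro u v hne hguv
        by_cases hu : Tmem G c u <;> by_cases hv : Tmem G c v
        · exact CB.Tmem_clique pat hC4 hu hv hne
        · exact absurd (hguv ▸ gT u hu) (gne5 v hv)
        · exact absurd (hguv.symm ▸ gT v hv) (gne5 u hu)
        · have h1 := (gV u hu).2
          have h2 := (gV v hv).2
          have : Classical.choose (cover2 u hu) = Classical.choose (cover2 v hv) := by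
            have := h1.symm.trans (hguv.trans h2)
            have := congrArg Fin.val this
            simp only [Fin.coe_castLE] at this
            exact Fin.ext this
          exact CB.Vmem_clique pat hC4 (gV u hu).1 (this ▸ (gV v hv).1) hne
      · -- cross fibres
        intro u v hguv
        by_cases hu : Tmem G c u <;> by_cases hv : Tmem G c v
        · exact absurd ((gT u hu).trans (gT v hv).symm) hguv
        · rw [gT u hu, (gV v hv).2]
          exact iff_of_true (CB.Tmem_Vmem pat hC4 hu (gV v hv).1) (wheel_hub _)
        · rw [gT v hv, (gV u hu).2]
          exact iff_of_true (CB.Tmem_Vmem pat hC4 hv (gV u hu).1).symm (wheel_hub _).symm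
        · rw [(gV u hu).2, (gV v hv).2, wheel_cyc]
          set i := Classical.choose (cover2 u hu) with hi
          set j := Classical.choose (cover2 v hv) with hj
          have hij : i ≠ j := by
            intro h
            exact hguv (((gV u hu).2).trans (by rw [← hj, ← h, hi]) |>.trans ((gV v hv).2).symm)
          constructor
          · intro hadj
            by_contra hcyc
            rcases cycfacts1 i j hij hcyc with h | h
            · exact CB.Vmem_far pat hC4 (gV u hu).1 (h ▸ (gV v hv).1) hadj
            · exact CB.Vmem_far pat hC4 (gV v hv).1 (h ▸ (gV u hu).1) hadj.symm
          · intro hcyc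
            rcases cycfacts2 i j hcyc with h | h
            · exact CB.Vmem_consec pat hP5 (gV u hu).1 (h ▸ (gV v hv).1)
            · exact (CB.Vmem_consec pat hP5 (gV v hv).1 (h ▸ (gV u hu).1)).symm
    · -- C5 expansion
      left
      have cover' : ∀ v : V, ∃ i, Vmem G c i v := by
        intro v
        rcases cover v with h | h
        · exact absurd ⟨v, h⟩ hT
        · exact h
      set f : V → Fin 5 := fun v => Classical.choose (cover' v) with hf
      have hfm : ∀ v, Vmem G c (f v) v := fun v => Classical.choose_spec (cover' v)
      have funiq : ∀ v i, Vmem G c i v → f v = i := fun v i h => Vuniq (hfm v) h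
      refine ⟨f, ?_, ?_, ?_⟩
      · exact fun i => ⟨c i, funiq _ _ (Or.inl rfl)⟩
      · intro u v hne hguv
        exact CB.Vmem_clique pat hC4 (hfm u) (hguv ▸ hfm v) hne
      · intro u v hguv
        constructor
        · intro hadj
          by_contra hcyc
          rcases cycfacts1 (f u) (f v) hguv hcyc with h | h
          · exact CB.Vmem_far pat hC4 (hfm u) (h ▸ hfm v) hadj
          · exact CB.Vmem_far pat hC4 (hfm v) (h ▸ hfm u) hadj.symm
        · intro hcyc
          rcases cycfacts2 (f u) (f v) hcyc with h | h
          · exact CB.Vmem_consec pat hP5 (hfm u) (h ▸ hfm v)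
          · exact (CB.Vmem_consec pat hP5 (hfm v) (h ▸ hfm u)).symm
  · exact Or.inl (caseA hcrit hP5 hC4 h5)
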